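/- Let Q : H →L[ℝ] H satisfy T* ∘ Q = Q* ∘ T, and let x : ℝ → H be a differentiable function with derivative x' such that T (x' t) = A (x t) for every t ≥ 0. Then for every t ≥ 0 the non-coercive storage function V(t) := ⟪T (x t), Q (x t)⟫ has derivative at t equal to ⟪x t, (A* ∘ Q + Q* ∘ A) (x t)⟫. (Lyapunov derivative formula used in the proof of Theorem 3.) -/

import Mathlib

open ContinuousLinearMap
open scoped RealInnerProductSpace

/-- Lyapunov derivative formula used in the proof of Theorem 3. -/
theorem stmt_6
    {H : Type*}
    [NormedAddCommGroup H] [InnerProductSpace ℝ H] [CompleteSpace H]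
    (T A : H →L[ℝ] H)
    (Q : H →L[ℝ] H)
    (hQT : adjoint T ∘L Q = adjoint Q ∘L T)
    (x x' : ℝ → H)
    (hxderiv : ∀ t : ℝ, HasDerivAt x (x' t) t)
    (hxdyn : ∀ t ≥ (0 : ℝ), T (x' t) = A (x t)) :
    ∀ t ≥ (0 : ℝ),
      HasDerivAt (fun s => ⟪T (x s), Q (x s)⟫)
        (⟪x t, (adjoint A ∘L Q + adjoint Q ∘L A) (x t)⟫) t := by
  intro t ht
  have h1 : HasDerivAt (fun s => T (x s)) (T (x' t)) t :=
    T.hasFDerivAt.comp_hasDerivAt t (hxderiv t)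
  have h2 : HasDerivAt (fun s => Q (x s)) (Q (x' t)) t :=
    Q.hasFDerivAt.comp_hasDerivAt t (hxderiv t)
  have key := h1.inner ℝ h2
  refine key.congr_deriv ?_
  have e1 : ⟪T (x' t), Q (x t)⟫ = ⟪x t, (adjoint A ∘L Q) (x t)⟫ := by
    rw [hxdyn t ht]
    simp [adjoint_inner_right]
  have e2 : ⟪T (x t), Q (x' t)⟫ = ⟪x t, (adjoint Q ∘L A) (x t)⟫ := by
    calc ⟪T (x t), Q (x' t)⟫ = ⟪x t, (adjoint T ∘L Q) (x' t)⟫ := by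
          simp [adjoint_inner_right, ← adjoint_inner_left]
      _ = ⟪x t, adjoint Q (T (x' t))⟫ := by rw [hQT]; rfl
      _ = ⟪x t, (adjoint Q ∘L A) (x t)⟫ := by rw [hxdyn t ht]; rfl
  simp [e1, e2, inner_add_right]; ring
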